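/- (Pliss Lemma) Given real numbers a_1, ..., a_n with a_i ≤ l for all i and with sum ∑ a_i > n·l', where l' < l, then for any l'' < l' there exist at least ((l'-l'')/(l-l''))·n indices i ∈ {1,...,n} such that for every k ≥ 1 with i + k - 1 ≤ n one has (1/k)·∑_{j=i}^{i+k-1} a_j > l''. -/

import Mathlib

open scoped Classical

/-- Pliss Lemma. -/
theorem stmt_1 (n : ℕ) (a : ℕ → ℝ) (l l' l'' : ℝ)
    (h1 : l'' < l') (h2 : l' < l)
    (hbd : ∀ i, 1 ≤ i → i ≤ n → a i ≤ l)
    (hsum : (n : ℝ) * l' < ∑ i ∈ Finset.Icc 1 n, a i) :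
    ((l' - l'') / (l - l'')) * n ≤
      (((Finset.Icc 1 n).filter (fun i =>
        ∀ k, 1 ≤ k → i + k - 1 ≤ n →
          l'' * k < ∑ j ∈ Finset.Icc i (i + k - 1), a j)).card : ℝ) := by
  set G := (Finset.Icc 1 n).filter (fun i =>
        ∀ k, 1 ≤ k → i + k - 1 ≤ n →
          l'' * k < ∑ j ∈ Finset.Icc i (i + k - 1), a j) with hG
  have hll : (0:ℝ) < l - l'' := by linarith
  set b : ℕ → ℝ := fun j => a j - l'' with hb
  set S : ℕ → ℝ := fun t => ∑ j ∈ Finset.Ioc 0 t, b j with hS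
  set c : ℕ → ℕ := fun t => (G.filter (fun i => t < i)).card with hc
  have hcmono : ∀ s t : ℕ, s ≤ t → c t ≤ c s := by
    intro s t hst
    apply Finset.card_le_card
    intro i hi
    simp only [Finset.mem_filter] at *
    exact ⟨hi.1, lt_of_le_of_lt hst hi.2⟩
  have hSdiff : ∀ s t : ℕ,s ≤ t → S t - S s = ∑ j ∈ Finset.Icc (s+1) t, b j := by
    intro s t hst
    rw [Finset.Icc_add_one_left_eq_Ioc]
    have h := Finset.sum_Ioc_consecutive b (Nat.zero_le s) hst
    simp only [hS]
    linarith [h]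
  have hbsum : ∀ s k : ℕ, 1 ≤ k →
      ∑ j ∈ Finset.Icc (s+1) (s+k), b j
        = (∑ j ∈ Finset.Icc (s+1) (s+k), a j) - l'' * k := by
    intro s k hk
    simp only [hb, Finset.sum_sub_distrib, Finset.sum_const, Nat.card_Icc]
    have : s + k + 1 - (s + 1) = k := by omega
    rw [this, nsmul_eq_mul]
    ring
  have key : ∀ d t : ℕ, t ≤ n → n ≤ t + d → S n ≤ S t + (l - l'') * c t := by
    intro d
    induction d with
    | zero =>
      intro t ht1 ht2
      have : t = n := by omega
      subst this
      nlinarith [show (0:ℝ) ≤ (c t : ℝ) from Nat.cast_nonneg _]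
    | succ d ih =>
      intro t ht1 ht2
      rcases eq_or_lt_of_le ht1 with h | h
      · subst h
        nlinarith [show (0:ℝ) ≤ (c t : ℝ) from Nat.cast_nonneg _]
      · by_cases hgood : t + 1 ∈ G
        · have hIH := ih (t+1) (by omega) (by omega)
          have hstep : S (t+1) - S t = b (t+1) := by
            rw [hSdiff t (t+1) (by omega)]
            simp
          have hbd1 : b (t+1) ≤ l - l'' := by
            have := hbd (t+1) (by omega) (by omega)
            simp only [hb]; linarith
          have hcard : c t = c (t+1) + 1 := by
            have hset : G.filter (fun i => t < i)
                = insert (t+1) (G.filter (fun i => t+1 < i)) := by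
              ext i
              simp only [Finset.mem_filter, Finset.mem_insert]
              constructor
              · rintro ⟨hiG, hit⟩
                rcases eq_or_lt_of_le (Nat.succ_le_of_lt hit) with h' | h'
                · left; omega
                · right; exact ⟨hiG, h'⟩
              · rintro (h' | ⟨hiG, hit⟩)
                · subst h'; exact ⟨hgood, by omega⟩
                · exact ⟨hiG, by omega⟩
            simp only [hc, hset]
            rw [Finset.card_insert_of_notMem]
            simp
          rw [hcard]
          push_cast
          linarith
        · have hmem : t + 1 ∈ Finset.Icc 1 n := by
            simp only [Finset.mem_Icc]; omega
          have hbad : ¬ (∀ k, 1 ≤ k → t + 1 + k - 1 ≤ n →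
              l'' * k < ∑ j ∈ Finset.Icc (t+1) (t + 1 + k - 1), a j) := by
            intro hcon
            exact hgood (Finset.mem_filter.mpr ⟨hmem, hcon⟩)
          push_neg at hbad
          obtain ⟨k, hk1, hk2, hk3⟩ := hbad
          have hm : t + 1 + k - 1 = t + k := by omega
          rw [hm] at hk2 hk3
          have hSm : S (t + k) ≤ S t := by
            have h1' := hSdiff t (t+k) (by omega)
            rw [hbsum t k hk1] at h1'
            linarith
          have hIH := ih (t+k) (by omega) (by omega)
          have hc' : (c (t+k) : ℝ) ≤ c t := by
            exact_mod_cast hcmono t (t+k) (by omega)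
          nlinarith
  have hkey := key n 0 (Nat.zero_le n) (by omega)
  have hS0 : S 0 = 0 := by simp [hS]
  have hc0 : c 0 = G.card := by
    simp only [hc]
    congr 1
    apply Finset.filter_true_of_mem
    intro i hi
    have := Finset.mem_Icc.mp (Finset.mem_filter.mp hi).1
    omega
  have hSn : S n = (∑ i ∈ Finset.Icc 1 n, a i) - l'' * n := by
    simp only [hS, ← Finset.Icc_add_one_left_eq_Ioc, Nat.succ_eq_add_one, Nat.zero_add]
    simp only [hb, Finset.sum_sub_distrib, Finset.sum_const, Nat.card_Icc]
    have : n + 1 - 1 = n := by omega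
    rw [this, nsmul_eq_mul]
    ring
  rw [hS0, hc0, hSn] at hkey
  rw [div_mul_eq_mul_div, div_le_iff₀ hll]
  nlinarith
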